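/- arXiv:math/0410127 — 4 statements merged into one kernel-verified Lean document; each statement's English description precedes it below -/
import Mathlib

section
/- The generating function G(t,s,z) = Σ_T t^(old leaves of T) s^(young leaves of T) z^(edges of T), summed over all plane trees T, satisfies the functional equation G = 1 + z(G-1+t)/(1 - z(G-1+s)). -/
/-- A plane tree: a root together with an ordered (possibly empty) list of subtrees. -/
inductive PlaneTree where
  | node : List PlaneTree → PlaneTree

namespace PlaneTree

/-- The number of edges of a plane tree. -/
def edges : PlaneTree → ℕ
  | node ts => (ts.attach.map (fun t => edges t.1 + 1)).sum
decreasing_by have := List.sizeOf_lt_of_mem t.2; simp at *; omega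

/-- Indicator that a tree is a single vertex (i.e. the corresponding child is a leaf). -/
def isLeafInd : PlaneTree → ℕ
  | node [] => 1
  | node (_ :: _) => 0

/-- The number of old leaves: leaves that are the leftmost child of their parent. -/
def oldLeaves : PlaneTree → ℕ
  | node [] => 0
  | node (t :: ts) =>
      isLeafInd t + oldLeaves t + (ts.attach.map (fun s => oldLeaves s.1)).sum
decreasing_by
  · simp; omega
  · have := List.sizeOf_lt_of_mem s.2; simp at *; omega

/-- The number of young leaves: leaves that are not the leftmost child of their parent. -/
def youngLeaves : PlaneTree → ℕ
  | node [] => 0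
  | node (t :: ts) =>
      youngLeaves t + (ts.attach.map (fun s => isLeafInd s.1 + youngLeaves s.1)).sum
decreasing_by
  · simp; omega
  · have := List.sizeOf_lt_of_mem s.2; simp at *; omega

end PlaneTree

namespace PlaneTree
instance : Inhabited PlaneTree := ⟨node []⟩
noncomputable instance : DecidableEq PlaneTree := Classical.decEq _
end PlaneTree

namespace PlaneTree

theorem strongInd (P : PlaneTree → Prop) (h : ∀ l, (∀ t ∈ l, P t) → P (node l)) :
    ∀ T, P T
  | node l => h l (fun t ht => strongInd P h t)
decreasing_by have := List.sizeOf_lt_of_mem ht; simp at *; omega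

theorem edges_node (ts : List PlaneTree) :
    edges (node ts) = (ts.map (fun t => edges t + 1)).sum := by
  rw [edges]
  congr 1
  simp

theorem oldLeaves_cons (t : PlaneTree) (ts : List PlaneTree) :
    oldLeaves (node (t :: ts)) = isLeafInd t + oldLeaves t + (ts.map oldLeaves).sum := by
  rw [oldLeaves]
  congr 1
  simp

theorem youngLeaves_cons (t : PlaneTree) (ts : List PlaneTree) :
    youngLeaves (node (t :: ts)) =
      youngLeaves t + (ts.map (fun s => isLeafInd s + youngLeaves s)).sum := by
  rw [youngLeaves]
  congr 1
  simp

theorem edges_node_nil : edges (node []) = 0 := by rw [edges_node]; simp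
theorem oldLeaves_node_nil : oldLeaves (node []) = 0 := by rw [oldLeaves]
theorem youngLeaves_node_nil : youngLeaves (node []) = 0 := by rw [youngLeaves]

theorem edges_eq_zero_iff (T : PlaneTree) : T.edges = 0 ↔ T = node [] := by
  obtain ⟨l⟩ := T
  rw [edges_node]
  cases l with
  | nil => simp
  | cons t ts => simp

end PlaneTree

namespace PlaneTree

theorem old_add_young_le : ∀ T : PlaneTree, T.oldLeaves + T.youngLeaves ≤ T.edges := by
  intro T
  induction T using strongInd with
  | h l ih =>
    cases l with
    | nil => simp [oldLeaves_node_nil, youngLeaves_node_nil, edges_node_nil]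
    | cons t ts =>
      rw [oldLeaves_cons, youngLeaves_cons, edges_node]
      have key : ∀ s : PlaneTree, s ∈ ts →
          isLeafInd s + (oldLeaves s + youngLeaves s) ≤ edges s + 1 := by
        intro s hs
        have h1 := ih s (List.mem_cons_of_mem _ hs)
        obtain ⟨ls⟩ := s
        cases ls with
        | nil => simp [isLeafInd, oldLeaves_node_nil, youngLeaves_node_nil]
        | cons a as => simp only [isLeafInd]; omega
      have hsum : ((ts.map oldLeaves).sum + (ts.map (fun s => isLeafInd s + youngLeaves s)).sum)
          ≤ (ts.map (fun t => edges t + 1)).sum := by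
        rw [← List.sum_map_add]
        apply List.sum_le_sum
        intro s hs
        have := key s hs; omega
      have ht : isLeafInd t + (oldLeaves t + youngLeaves t) ≤ edges t + 1 := by
        have h1 := ih t List.mem_cons_self
        obtain ⟨ls⟩ := t
        cases ls with
        | nil => simp [isLeafInd, oldLeaves_node_nil, youngLeaves_node_nil]
        | cons a as => simp only [isLeafInd]; omega
      simp only [List.map_cons, List.sum_cons]
      omega

theorem oldLeaves_le_edges (T : PlaneTree) : T.oldLeaves ≤ T.edges :=
  le_trans (Nat.le_add_right _ _) (old_add_young_le T)

theorem youngLeaves_le_edges (T : PlaneTree) : T.youngLeaves ≤ T.edges :=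
  le_trans (Nat.le_add_left _ _) (old_add_young_le T)

theorem finite_edges_le : ∀ n : ℕ, {T : PlaneTree | T.edges ≤ n}.Finite := by
  intro n
  induction n with
  | zero =>
    apply Set.Finite.subset (Set.finite_singleton (node []))
    intro T hT
    simp only [Set.mem_setOf_eq, Nat.le_zero] at hT
    simpa using (edges_eq_zero_iff T).mp hT
  | succ n ih =>
    haveI : Finite {T : PlaneTree // T.edges ≤ n} := ih
    have hL : {l : List {T : PlaneTree // T.edges ≤ n} | l.length ≤ n + 1}.Finite :=
      List.finite_length_le _ _
    apply Set.Finite.subset (hL.image (fun l => node (l.map Subtype.val)))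
    intro T hT
    simp only [Set.mem_setOf_eq] at hT
    obtain ⟨l⟩ := T
    have hmem : ∀ t ∈ l, edges t ≤ n := by
      intro t ht
      have : edges t + 1 ≤ (l.map (fun t => edges t + 1)).sum :=
        List.single_le_sum (by simp) _ (List.mem_map_of_mem ht)
      rw [← edges_node] at this; omega
    have hlen : l.length ≤ n + 1 := by
      have : (l.map (fun _ => 1)).sum ≤ (l.map (fun t => edges t + 1)).sum :=
        List.sum_le_sum (by intro t ht; omega)
      simp only [List.map_const', List.sum_replicate, smul_eq_mul, mul_one] at this
      rw [← edges_node] at this; omega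
    refine ⟨l.attach.map (fun t => ⟨t.1, hmem t.1 t.2⟩), ?_, ?_⟩
    · simpa using hlen
    · simp [List.map_map, List.attach_map_subtype_val]

theorem finite_edges_eq (n : ℕ) : {T : PlaneTree | T.edges = n}.Finite :=
  (finite_edges_le n).subset (fun T hT => le_of_eq hT)

/-- The finset of all plane trees with exactly `n` edges. -/
noncomputable def treesFS (n : ℕ) : Finset PlaneTree := (finite_edges_eq n).toFinset

@[simp] theorem mem_treesFS {n : ℕ} {T : PlaneTree} : T ∈ treesFS n ↔ T.edges = n :=
  Set.Finite.mem_toFinset _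

end PlaneTree

open MvPolynomial

/-- The coefficients of the trivariate generating function `G(t,s,z)` for plane trees:
the coefficient of `z^n` is `Σ_{i,j} (# trees with n edges, i old leaves, j young leaves) t^i s^j`,
as a polynomial in `t = X 0` and `s = X 1`. -/
noncomputable def treeGF : PowerSeries (MvPolynomial (Fin 2) ℚ) :=
  PowerSeries.mk fun n =>
    ∑ i ∈ Finset.range (n + 1), ∑ j ∈ Finset.range (n + 1),
      (Nat.card {T : PlaneTree // T.edges = n ∧ T.oldLeaves = i ∧ T.youngLeaves = j} :
          MvPolynomial (Fin 2) ℚ) * X 0 ^ i * X 1 ^ j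

namespace PlaneTree

/-- The monomial weight of a tree. -/
noncomputable def wt (T : PlaneTree) : MvPolynomial (Fin 2) ℚ :=
  X 0 ^ T.oldLeaves * X 1 ^ T.youngLeaves

theorem claimA : treeGF = PowerSeries.mk fun n => ∑ T ∈ treesFS n, wt T := by
  refine PowerSeries.ext fun n => ?_
  rw [treeGF, PowerSeries.coeff_mk, PowerSeries.coeff_mk]
  rw [← Finset.sum_product']
  have hmaps : ∀ T ∈ treesFS n, (T.oldLeaves, T.youngLeaves)
      ∈ Finset.range (n+1) ×ˢ Finset.range (n+1) := (fun T hT => by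
      rw [mem_treesFS] at hT
      simp only [Finset.mem_product, Finset.mem_range]
      constructor
      · exact lt_of_le_of_lt (hT ▸ oldLeaves_le_edges T) (Nat.lt_succ_self n)
      · exact lt_of_le_of_lt (hT ▸ youngLeaves_le_edges T) (Nat.lt_succ_self n))
  rw [← Finset.sum_fiberwise_of_maps_to hmaps wt]
  apply Finset.sum_congr rfl
  rintro ⟨i, j⟩ _
  have hfin : {T : PlaneTree | T.edges = n ∧ T.oldLeaves = i ∧ T.youngLeaves = j}.Finite :=
    (finite_edges_eq n).subset (fun T hT => hT.1)
  have hcard : Nat.card {T : PlaneTree // T.edges = n ∧ T.oldLeaves = i ∧ T.youngLeaves = j}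
      = ((treesFS n).filter (fun T => (T.oldLeaves, T.youngLeaves) = (i, j))).card := by
    rw [show { T : PlaneTree // T.edges = n ∧ T.oldLeaves = i ∧ T.youngLeaves = j}
        = ↥{T : PlaneTree | T.edges = n ∧ T.oldLeaves = i ∧ T.youngLeaves = j} from rfl,
      Nat.card_coe_set_eq, Set.ncard_eq_toFinset_card _ hfin]
    congr 1
    ext T
    simp only [Set.Finite.mem_toFinset, Set.mem_setOf_eq, Finset.mem_filter, mem_treesFS,
      Prod.mk.injEq]
  rw [hcard]
  rw [Finset.sum_congr rfl (g := fun _ => (X 0 : MvPolynomial (Fin 2) ℚ) ^ i * X 1 ^ j)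
    (fun T hT => by
      simp only [Finset.mem_filter, Prod.mk.injEq] at hT
      rw [wt, hT.2.1, hT.2.2])]
  rw [Finset.sum_const, nsmul_eq_mul, mul_assoc]

end PlaneTree

namespace PlaneTree

def children : PlaneTree → List PlaneTree
  | node l => l

@[simp] theorem children_node (l : List PlaneTree) : children (node l) = l := rfl

@[simp] theorem node_children (T : PlaneTree) : node (children T) = T := by
  obtain ⟨l⟩ := T; rfl

theorem isLeafInd_of_ne {T : PlaneTree} (h : T ≠ node []) : T.isLeafInd = 0 := by
  obtain ⟨l⟩ := T
  cases l with
  | nil => exact absurd rfl h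
  | cons t ts => rfl

@[simp] theorem wt_node_nil : wt (node []) = 1 := by
  rw [wt, oldLeaves_node_nil, youngLeaves_node_nil]; simp

theorem treesFS_zero : treesFS 0 = {node []} := by
  ext T
  simp [mem_treesFS, edges_eq_zero_iff]

theorem node_nil_not_mem (n : ℕ) : node [] ∉ treesFS (n + 1) := by
  simp [mem_treesFS, edges_node_nil]

/-- weight of a first child -/
noncomputable def aWt (c : PlaneTree) : MvPolynomial (Fin 2) ℚ := X 0 ^ c.isLeafInd * wt c
/-- weight of a non-first child -/
noncomputable def bWt (c : PlaneTree) : MvPolynomial (Fin 2) ℚ := X 1 ^ c.isLeafInd * wt c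

theorem wt_single (c : PlaneTree) : wt (node [c]) = aWt c := by
  rw [wt, oldLeaves_cons, youngLeaves_cons, aWt, wt]
  simp [pow_add, mul_assoc]

theorem edges_concat (l : List PlaneTree) (c : PlaneTree) :
    edges (node (l ++ [c])) = edges (node l) + edges c + 1 := by
  rw [edges_node, edges_node, List.map_append, List.sum_append]
  simp
  omega

theorem wt_concat {l : List PlaneTree} (hl : l ≠ []) (c : PlaneTree) :
    wt (node (l ++ [c])) = wt (node l) * bWt c := by
  cases l with
  | nil => exact absurd rfl hl
  | cons t ts =>
    rw [List.cons_append, wt, wt, bWt, wt, oldLeaves_cons, oldLeaves_cons,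
      youngLeaves_cons, youngLeaves_cons, List.map_append, List.map_append,
      List.sum_append, List.sum_append]
    simp only [List.map_cons, List.map_nil, List.sum_cons, List.sum_nil]
    ring

theorem claimB (n : ℕ) :
    ∑ T ∈ treesFS (n + 1), wt T
      = (∑ c ∈ treesFS n, aWt c)
        + ∑ ij ∈ Finset.HasAntidiagonal.antidiagonal n,
            (∑ c ∈ treesFS ij.1, bWt c) *
              (∑ T ∈ (treesFS ij.2).erase (node []), wt T) := by
  classical
  rw [← Finset.sum_filter_add_sum_filter_not (treesFS (n + 1))
    (fun T => (children T).length = 1) wt]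
  congr 1
  · -- trees with exactly one child ↔ trees with n edges
    refine Finset.sum_nbij' (fun T => (children T).headI) (fun c => node [c]) ?_ ?_ ?_ ?_ ?_
    · intro T hT
      simp only [Finset.mem_filter, mem_treesFS] at hT
      obtain ⟨c, hc⟩ := List.length_eq_one_iff.mp hT.2
      obtain ⟨l⟩ := T
      simp only [children_node] at hc
      subst hc
      simp only [children_node, List.headI, mem_treesFS]
      have := hT.1
      rw [show ([c] : List PlaneTree) = [] ++ [c] from rfl, edges_concat, edges_node_nil] at this
      omega
    · intro c hc
      simp only [mem_treesFS] at hc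
      simp only [Finset.mem_filter, mem_treesFS, children_node, List.length_singleton,
        and_true]
      rw [show ([c] : List PlaneTree) = [] ++ [c] from rfl, edges_concat, edges_node_nil]
      omega
    · intro T hT
      simp only [Finset.mem_filter, mem_treesFS] at hT
      obtain ⟨c, hc⟩ := List.length_eq_one_iff.mp hT.2
      obtain ⟨l⟩ := T
      simp only [children_node] at hc
      subst hc
      rfl
    · intro c _
      rfl
    · intro T hT
      simp only [Finset.mem_filter, mem_treesFS] at hT
      obtain ⟨c, hc⟩ := List.length_eq_one_iff.mp hT.2
      obtain ⟨l⟩ := T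
      simp only [children_node] at hc
      subst hc
      simp only [children_node, List.headI]
      exact wt_single c
  · -- trees with ≥ 2 children ↔ pairs (tree with ≥1 child, last child)
    have hrw : ∀ ij ∈ Finset.HasAntidiagonal.antidiagonal n,
        (∑ c ∈ treesFS ij.1, bWt c) * (∑ T ∈ (treesFS ij.2).erase (node []), wt T)
          = ∑ q ∈ treesFS ij.1 ×ˢ (treesFS ij.2).erase (node []), bWt q.1 * wt q.2 := by
      intro ij _
      rw [Finset.sum_mul_sum, Finset.sum_product]
    rw [Finset.sum_congr rfl hrw]
    have hdisj : (↑(Finset.HasAntidiagonal.antidiagonal n) : Set (ℕ × ℕ)).PairwiseDisjoint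
        (fun ij : ℕ × ℕ => treesFS ij.1 ×ˢ (treesFS ij.2).erase (node [])) := by
      rintro ⟨i₁, j₁⟩ h1 ⟨i₂, j₂⟩ h2 hne
      simp only [Finset.mem_coe, Finset.HasAntidiagonal.mem_antidiagonal] at h1 h2
      refine Finset.disjoint_left.mpr ?_
      rintro ⟨c, T'⟩ hq1 hq2
      simp only [Finset.mem_product, Finset.mem_erase, mem_treesFS] at hq1 hq2
      exact hne (by
        have := hq1.1; have := hq2.1; have := hq1.2.2; have := hq2.2.2
        simp_all)
    have hbi : (∑ q ∈ (Finset.HasAntidiagonal.antidiagonal n).biUnion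
          (fun ij : ℕ × ℕ => treesFS ij.1 ×ˢ (treesFS ij.2).erase (node [])),
          bWt q.1 * wt q.2)
        = ∑ ij ∈ Finset.HasAntidiagonal.antidiagonal n,
            ∑ q ∈ treesFS ij.1 ×ˢ (treesFS ij.2).erase (node []), bWt q.1 * wt q.2 :=
      Finset.sum_biUnion hdisj
    rw [← hbi]
    refine Finset.sum_nbij'
      (fun T => ((children T).getLastD (node []), node (children T).dropLast))
      (fun q => node (children q.2 ++ [q.1])) ?_ ?_ ?_ ?_ ?_
    · -- forward membership
      intro T hT
      simp only [Finset.mem_filter, mem_treesFS] at hT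
      have hne : children T ≠ [] := by
        intro h
        have : T = node [] := by
          obtain ⟨l⟩ := T; simp only [children_node] at h; rw [h]
        rw [this, edges_node_nil] at hT; omega
      have hlen2 : 2 ≤ (children T).length := by
        have := List.length_pos_iff.mpr hne
        omega
      set l := children T with hl
      have hdec : l.dropLast ++ [l.getLast hne] = l := List.dropLast_append_getLast hne
      have hgld : l.getLastD (node []) = l.getLast hne := by
        rw [List.getLastD_eq_getLast?, List.getLast?_eq_getLast hne]; rfl
      have hT' : T = node (l.dropLast ++ [l.getLast hne]) := by
        rw [hdec, hl, node_children]
      have hedges : edges (node l.dropLast) + edges (l.getLast hne) + 1 = n + 1 := by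
        rw [← edges_concat, ← hT']; exact hT.1
      have hdlne : l.dropLast ≠ [] := by
        intro h
        rw [h] at hdec
        have : l.length = 1 := by rw [← hdec]; rfl
        omega
      refine Finset.mem_biUnion.mpr ⟨(edges (l.getLast hne), edges (node l.dropLast)), ?_, ?_⟩
      · simp only [Finset.HasAntidiagonal.mem_antidiagonal]; omega
      · simp only [Finset.mem_product, Finset.mem_erase, mem_treesFS, hgld]
        simp [hdlne]
    · -- backward membership
      rintro ⟨c, T'⟩ hq
      obtain ⟨⟨i, j⟩, hij, hq2⟩ := Finset.mem_biUnion.mp hq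
      rw [Finset.HasAntidiagonal.mem_antidiagonal] at hij
      rw [Finset.mem_product, Finset.mem_erase] at hq2
      have hc := hq2.1
      have hT'ne := hq2.2.1
      have hT' := hq2.2.2
      rw [mem_treesFS] at hc hT'
      dsimp only at hij hc hT'ne hT' ⊢
      have hne : children T' ≠ [] := by
        intro h
        apply hT'ne
        obtain ⟨l⟩ := T'; simp only [children_node] at h; rw [h]
      simp only [Finset.mem_filter, mem_treesFS]
      constructor
      · rw [edges_concat, node_children]
        omega
      · simp only [children_node, List.length_append, List.length_singleton]
        have := List.length_pos_iff.mpr hne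
        omega
    · -- left inverse
      intro T hT
      simp only [Finset.mem_filter, mem_treesFS] at hT
      have hne : children T ≠ [] := by
        intro h
        have : T = node [] := by
          obtain ⟨l⟩ := T; simp only [children_node] at h; rw [h]
        rw [this, edges_node_nil] at hT; omega
      have hgld : (children T).getLastD (node []) = (children T).getLast hne := by
        rw [List.getLastD_eq_getLast?, List.getLast?_eq_getLast hne]; rfl
      simp only [hgld, children_node]
      rw [List.dropLast_append_getLast hne, node_children]
    · -- right inverse
      rintro ⟨c, T'⟩ hq
      simp only [children_node, List.dropLast_concat]
      have : (children T' ++ [c]).getLastD (node []) = c := by simp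
      rw [this, node_children]
    · -- weights agree
      intro T hT
      simp only [Finset.mem_filter, mem_treesFS] at hT
      have hne : children T ≠ [] := by
        intro h
        have : T = node [] := by
          obtain ⟨l⟩ := T; simp only [children_node] at h; rw [h]
        rw [this, edges_node_nil] at hT; omega
      have hlen2 : 2 ≤ (children T).length := by
        have := List.length_pos_iff.mpr hne
        omega
      have hgld : (children T).getLastD (node []) = (children T).getLast hne := by
        rw [List.getLastD_eq_getLast?, List.getLast?_eq_getLast hne]; rfl
      have hdlne : (children T).dropLast ≠ [] := by
        intro h
        have hdec := List.dropLast_append_getLast hne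
        rw [h] at hdec
        have : (children T).length = 1 := by rw [← hdec]; rfl
        omega
      have hT' : T = node ((children T).dropLast ++ [(children T).getLast hne]) := by
        rw [List.dropLast_append_getLast hne, node_children]
      calc wt T = wt (node ((children T).dropLast ++ [(children T).getLast hne])) := by
            rw [← hT']
        _ = wt (node (children T).dropLast) * bWt ((children T).getLast hne) :=
            wt_concat hdlne _
        _ = bWt ((children T).getLastD (node [])) * wt (node (children T).dropLast) := by
            rw [hgld]; ring

end PlaneTree

namespace PlaneTree

noncomputable def Gser : PowerSeries (MvPolynomial (Fin 2) ℚ) :=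
  PowerSeries.mk fun n => ∑ T ∈ treesFS n, wt T
noncomputable def Aser : PowerSeries (MvPolynomial (Fin 2) ℚ) :=
  PowerSeries.mk fun n => ∑ c ∈ treesFS n, aWt c
noncomputable def Bser : PowerSeries (MvPolynomial (Fin 2) ℚ) :=
  PowerSeries.mk fun n => ∑ c ∈ treesFS n, bWt c

theorem treeGF_eq_Gser : treeGF = Gser := claimA

theorem coeff_G_sub_one (n : ℕ) :
    PowerSeries.coeff n (Gser - 1) = ∑ T ∈ (treesFS n).erase (node []), wt T := by
  rw [map_sub, PowerSeries.coeff_one, Gser, PowerSeries.coeff_mk]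
  cases n with
  | zero => simp [treesFS_zero]
  | succ n =>
    rw [Finset.erase_eq_of_notMem (node_nil_not_mem n), if_neg (Nat.succ_ne_zero n), sub_zero]

theorem wt_of_mem_succ {n : ℕ} {T : PlaneTree} (hT : T ∈ treesFS (n + 1)) :
    T.isLeafInd = 0 := by
  apply isLeafInd_of_ne
  intro h
  rw [h] at hT
  exact node_nil_not_mem n hT

theorem Aser_eq : Aser = Gser - 1 + PowerSeries.C (X 0) := by
  refine PowerSeries.ext fun n => ?_
  rw [map_add, coeff_G_sub_one, PowerSeries.coeff_C, Aser, PowerSeries.coeff_mk]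
  cases n with
  | zero =>
    rw [treesFS_zero]
    simp [aWt, isLeafInd]
  | succ n =>
    rw [if_neg (Nat.succ_ne_zero n), add_zero, Finset.erase_eq_of_notMem (node_nil_not_mem n)]
    refine Finset.sum_congr rfl fun T hT => ?_
    rw [aWt, wt_of_mem_succ hT, pow_zero, one_mul]

theorem Bser_eq : Bser = Gser - 1 + PowerSeries.C (X 1) := by
  refine PowerSeries.ext fun n => ?_
  rw [map_add, coeff_G_sub_one, PowerSeries.coeff_C, Bser, PowerSeries.coeff_mk]
  cases n with
  | zero =>
    rw [treesFS_zero]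
    simp [bWt, isLeafInd]
  | succ n =>
    rw [if_neg (Nat.succ_ne_zero n), add_zero, Finset.erase_eq_of_notMem (node_nil_not_mem n)]
    refine Finset.sum_congr rfl fun T hT => ?_
    rw [bWt, wt_of_mem_succ hT, pow_zero, one_mul]

theorem mainEq : Gser = 1 + PowerSeries.X * Aser + PowerSeries.X * (Bser * (Gser - 1)) := by
  refine PowerSeries.ext fun n => ?_
  rw [map_add, map_add]
  cases n with
  | zero =>
    rw [PowerSeries.coeff_zero_eq_constantCoeff, map_mul, map_mul,
      PowerSeries.constantCoeff_X, zero_mul, zero_mul, map_one, add_zero, add_zero]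
    rw [show Gser = PowerSeries.mk fun n => ∑ T ∈ treesFS n, wt T from rfl]
    simp [treesFS_zero]
  | succ n =>
    have hG : ∀ m, PowerSeries.coeff m Gser = ∑ T ∈ treesFS m, wt T := fun m => by
      rw [show Gser = PowerSeries.mk fun k => ∑ T ∈ treesFS k, wt T from rfl,
        PowerSeries.coeff_mk]
    have hA : ∀ m, PowerSeries.coeff m Aser = ∑ c ∈ treesFS m, aWt c := fun m => by
      rw [show Aser = PowerSeries.mk fun k => ∑ c ∈ treesFS k, aWt c from rfl,
        PowerSeries.coeff_mk]
    have hB : ∀ m, PowerSeries.coeff m Bser = ∑ c ∈ treesFS m, bWt c := fun m => by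
      rw [show Bser = PowerSeries.mk fun k => ∑ c ∈ treesFS k, bWt c from rfl,
        PowerSeries.coeff_mk]
    rw [PowerSeries.coeff_succ_X_mul, PowerSeries.coeff_succ_X_mul, PowerSeries.coeff_one,
      if_neg (Nat.succ_ne_zero n), zero_add, PowerSeries.coeff_mul]
    rw [hG, hA, claimB n]
    congr 1
    refine Finset.sum_congr rfl fun ij _ => ?_
    rw [hB, coeff_G_sub_one]

end PlaneTree

/-- The generating function `G(t,s,z)` satisfies `G = 1 + z(G-1+t)/(1 - z(G-1+s))`. -/
theorem treeGF_functional_equation :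
    letI t : PowerSeries (MvPolynomial (Fin 2) ℚ) := PowerSeries.C (X 0)
    letI s : PowerSeries (MvPolynomial (Fin 2) ℚ) := PowerSeries.C (X 1)
    letI z : PowerSeries (MvPolynomial (Fin 2) ℚ) := PowerSeries.X
    treeGF = 1 + z * (treeGF - 1 + t) * Ring.inverse (1 - z * (treeGF - 1 + s)) := by
  show treeGF = 1 + PowerSeries.X * (treeGF - 1 + PowerSeries.C (X 0)) *
      Ring.inverse (1 - PowerSeries.X * (treeGF - 1 + PowerSeries.C (X 1)))
  rw [PlaneTree.treeGF_eq_Gser, ← PlaneTree.Aser_eq, ← PlaneTree.Bser_eq]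
  have hu : IsUnit (1 - PowerSeries.X * PlaneTree.Bser) := by
    rw [PowerSeries.isUnit_iff_constantCoeff]
    rw [map_sub, map_one, map_mul, PowerSeries.constantCoeff_X, zero_mul, sub_zero]
    exact isUnit_one
  have key : (PlaneTree.Gser - 1) * (1 - PowerSeries.X * PlaneTree.Bser)
      = PowerSeries.X * PlaneTree.Aser := by
    have h := PlaneTree.mainEq
    linear_combination h
  rw [← key, mul_assoc, Ring.mul_inverse_cancel _ hu, mul_one]
  ring
end

section
/- For n ≥ 1, the number of plane trees with n edges having exactly one old leaf is 2^(n-1). -/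
namespace PlaneTree

theorem oldLeaves_node (t : PlaneTree) (ts : List PlaneTree) :
    oldLeaves (node (t :: ts)) =
      isLeafInd t + oldLeaves t + (ts.map (fun s => oldLeaves s)).sum := by
  rw [oldLeaves, show (fun (s : {x // x ∈ ts}) => oldLeaves s.1) = (fun s => oldLeaves s) ∘ Subtype.val from rfl, ← List.map_map, List.attach_map_subtype_val]

theorem one_le : (T : PlaneTree) → 1 ≤ T.isLeafInd + T.oldLeaves
  | node [] => by simp [isLeafInd, oldLeaves]
  | node (t :: ts) => by
      have := one_le t
      rw [isLeafInd, oldLeaves_node]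
      omega

theorem eq_leaf_of_oldLeaves_eq_zero : ∀ {T : PlaneTree}, T.oldLeaves = 0 → T = node []
  | node [], _ => rfl
  | node (t :: ts), h => by
      have h1 := one_le (node (t :: ts))
      rw [isLeafInd] at h1; omega

/-- Build the "caterpillar" tree from a list of extra-leaf counts. -/
def ofSpine : List ℕ → PlaneTree
  | [] => node []
  | a :: l => node (ofSpine l :: List.replicate a (node []))

/-- Extract the spine data of a tree. -/
def spine : PlaneTree → List ℕ
  | node [] => []
  | node (t :: ts) => ts.length :: spine t

theorem spine_ofSpine : ∀ l : List ℕ, spine (ofSpine l) = l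
  | [] => rfl
  | a :: l => by
      rw [ofSpine, spine, spine_ofSpine l, List.length_replicate]

theorem edges_ofSpine : ∀ l : List ℕ, edges (ofSpine l) = l.length + l.sum
  | [] => by simp [ofSpine, edges_node]
  | a :: l => by
      rw [ofSpine, edges_node]
      simp only [List.map_cons, List.sum_cons, List.map_replicate, List.sum_replicate,
        edges_ofSpine l]
      have : edges (node []) = 0 := by simp [edges_node]
      rw [this]
      simp [List.length_cons, List.sum_cons, Nat.smul_one_eq_cast]
      ring

theorem ind_add_old_ofSpine : ∀ l : List ℕ,
    isLeafInd (ofSpine l) + oldLeaves (ofSpine l) = 1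
  | [] => by simp [ofSpine, isLeafInd, oldLeaves]
  | a :: l => by
      rw [ofSpine, isLeafInd, oldLeaves_node]
      have h0 : oldLeaves (node []) = 0 := by rw [oldLeaves]
      have := ind_add_old_ofSpine l
      simp [List.map_replicate, h0, List.sum_replicate]
      omega

theorem oldLeaves_ofSpine (l : List ℕ) (hl : l ≠ []) : oldLeaves (ofSpine l) = 1 := by
  cases l with
  | nil => exact absurd rfl hl
  | cons a l =>
      have h := ind_add_old_ofSpine (a :: l)
      rw [ofSpine, isLeafInd] at h
      rw [ofSpine]; omega

theorem ofSpine_spine : ∀ T : PlaneTree, T.oldLeaves = 1 → ofSpine (spine T) = T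
  | node [], h => by rw [oldLeaves] at h; omega
  | node (t :: ts), h => by
      rw [oldLeaves_node] at h
      have ht1 := one_le t
      have hsum : (ts.map (fun s => oldLeaves s)).sum = 0 := by omega
      have hts : ∀ s ∈ ts, s = node [] := by
        intro s hs
        refine eq_leaf_of_oldLeaves_eq_zero ?_
        have := List.sum_eq_zero_iff.mp ?_ (oldLeaves s) (List.mem_map_of_mem (f := fun s => oldLeaves s) hs)
        · exact this
        · exact hsum
      have hrep : ts = List.replicate ts.length (node []) :=
        List.eq_replicate_of_mem hts
      have hhead : ofSpine (spine t) = t := by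
        cases t with
        | node us =>
          cases us with
          | nil => rfl
          | cons u us =>
              rw [isLeafInd] at h
              exact ofSpine_spine (node (u :: us)) (by omega)
      rw [spine, ofSpine, hhead, ← hrep]

theorem ofSpine_mem_aux (bl : List ℕ) (hpos : ∀ b ∈ bl, 0 < b) :
    (bl.map (fun b => b - 1)).sum + bl.length = bl.sum := by
  induction bl with
  | nil => simp
  | cons b bl ih =>
      have hb := hpos b List.mem_cons_self
      have := ih (fun x hx => hpos x (List.mem_cons_of_mem _ hx))
      simp only [List.map_cons, List.sum_cons, List.length_cons]
      omega

theorem sum_map_add_one (l : List ℕ) : (l.map (· + 1)).sum = l.sum + l.length := by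
  induction l with
  | nil => simp
  | cons a l ih => simp [ih]; omega

end PlaneTree

/-- The number of plane trees with `n` edges having exactly one old leaf is `2^(n-1)`. -/
theorem card_planeTrees_one_old (n : ℕ) (hn : 1 ≤ n) :
    Nat.card {T : PlaneTree // T.edges = n ∧ T.oldLeaves = 1} = 2 ^ (n - 1) := by
  classical
  have key : Nat.card {T : PlaneTree // T.edges = n ∧ T.oldLeaves = 1}
      = Nat.card (Composition n) := by
    refine Nat.card_eq_of_bijective
      (fun T => ⟨(PlaneTree.spine T.1).map (· + 1), ?_, ?_⟩) ⟨?_, ?_⟩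
    · intro i hi
      simp only [List.mem_map] at hi
      obtain ⟨a, -, rfl⟩ := hi
      omega
    · obtain ⟨T, he, ho⟩ := T
      dsimp only
      rw [PlaneTree.sum_map_add_one]
      have := PlaneTree.edges_ofSpine (PlaneTree.spine T)
      rw [PlaneTree.ofSpine_spine T ho] at this
      omega
    · rintro ⟨T, hT⟩ ⟨T', hT'⟩ hEq
      simp only [Composition.mk.injEq] at hEq
      have hsp : PlaneTree.spine T = PlaneTree.spine T' :=
        List.map_injective_iff.mpr (fun a b => by omega) hEq
      have := congrArg PlaneTree.ofSpine hsp
      rw [PlaneTree.ofSpine_spine T hT.2, PlaneTree.ofSpine_spine T' hT'.2] at this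
      exact Subtype.ext this
    · rintro ⟨bl, hpos, hsum⟩
      have hbl : bl ≠ [] := by
        rintro rfl
        simp at hsum
        omega
      set l := bl.map (fun b => b - 1) with hl
      have hlne : l ≠ [] := by
        simp [hl, hbl]
      have haux := PlaneTree.ofSpine_mem_aux bl (fun b hb => hpos hb)
      refine ⟨⟨PlaneTree.ofSpine l, ?_, PlaneTree.oldLeaves_ofSpine l hlne⟩, ?_⟩
      · rw [PlaneTree.edges_ofSpine]
        simp only [hl, List.length_map]
        omega
      · ext1
        simp only [PlaneTree.spine_ofSpine]
        rw [hl, List.map_map]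
        have : ∀ b ∈ bl, ((fun x => x + 1) ∘ fun b => b - 1) b = b := by
          intro b hb
          have := hpos hb
          simp
          omega
        rw [List.map_congr_left this]
        exact List.map_id' bl
  rw [key, Nat.card_eq_fintype_card, composition_card]
end

section
/- For all n ≥ 0 and i ≥ 1, j ≥ 0 with 2i + j ≤ n + 1: Σ_j holds the identity (1/n)·C(n,i)·C(n-i,j)·C(n-i-j,i-1) summed over j from 0 to n-2i+1 equals (2^(n-2k+1)/k)·C(n-1,2k-2)·C(2k-2,k-1) with k = i; that is, Σ_{j=0}^{n-2i+1} (1/n)·C(n,i)·C(n-i,j)·C(n-i-j,i-1) = (2^(n-2i+1)/i)·C(n-1,2i-2)·C(2i-2,i-1). -/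
/-- Summing the refined count of plane trees over the number of young leaves `j`
recovers the count by old leaves:
`Σ_{j=0}^{n-2i+1} (1/n)·C(n,i)·C(n-i,j)·C(n-i-j,i-1) = (2^(n-2i+1)/i)·C(n-1,2i-2)·C(2i-2,i-1)`. -/
theorem sum_refined_eq_old_count (n i : ℕ) (hn : 1 ≤ n) (hi : 1 ≤ i) (h : 2 * i - 1 ≤ n) :
    ∑ j ∈ Finset.range (n + 2 - 2 * i),
        (1 / n : ℚ) * n.choose i * (n - i).choose j * (n - i - j).choose (i - 1) =
      (2 ^ (n + 1 - 2 * i) / i : ℚ) * (n - 1).choose (2 * i - 2) * (2 * i - 2).choose (i - 1) := by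
  set m := n - i with hm
  set r := i - 1 with hr
  set e := n + 1 - 2 * i with he
  have hrange : n + 2 - 2 * i = e + 1 := by omega
  have hme : m - r = e := by omega
  -- term-wise rewriting: C(m,j)·C(m-j,r) = C(m,r)·C(m-r,j) for j ≤ e
  have key : ∀ j ∈ Finset.range (e + 1),
      (1 / n : ℚ) * n.choose i * m.choose j * (m - j).choose r
        = ((1 / n : ℚ) * n.choose i * m.choose r) * (e.choose j) := by
    intro j hj
    rw [Finset.mem_range] at hj
    have hj' : j ≤ e := Nat.lt_succ_iff.mp hj
    have h1 : m.choose (j + r) * (j + r).choose j = m.choose j * (m - j).choose r := by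
      have := Nat.choose_mul (n := m) (k := j + r) (s := j) (by omega)
      simpa [Nat.add_sub_cancel_left] using this
    have h2 : m.choose (j + r) * (j + r).choose r = m.choose r * (m - r).choose j := by
      have := Nat.choose_mul (n := m) (k := j + r) (s := r) (by omega)
      simpa [Nat.add_sub_cancel] using this
    have h3 : (j + r).choose j = (j + r).choose r := Nat.choose_symm_add
    have h4 : m.choose j * (m - j).choose r = m.choose r * e.choose j := by
      rw [← h1, h3, h2, hme]
    have h4q : ((m.choose j : ℚ)) * ((m - j).choose r) = (m.choose r) * (e.choose j) := by
      exact_mod_cast congrArg (Nat.cast : ℕ → ℚ) h4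
    rw [mul_assoc, h4q]
    ring
  rw [hrange, Finset.sum_congr rfl key, ← Finset.mul_sum]
  have hsum : ∑ j ∈ Finset.range (e + 1), (e.choose j : ℚ) = 2 ^ e := by
    exact_mod_cast congrArg (Nat.cast : ℕ → ℚ) (Nat.sum_range_choose e)
  rw [hsum]
  -- the scalar identity
  have hnat : i * (n.choose i * m.choose r) =
      n * ((n - 1).choose (2 * i - 2) * (2 * i - 2).choose (i - 1)) := by
    have h1 : n * (n - 1).choose (i - 1) = n.choose i * i := by
      have := Nat.add_one_mul_choose_eq (n - 1) (i - 1)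
      have hn1 : n - 1 + 1 = n := by omega
      have hi1 : i - 1 + 1 = i := by omega
      rwa [hn1, hi1] at this
    have h2 : (n - 1).choose (2 * i - 2) * (2 * i - 2).choose (i - 1)
        = (n - 1).choose (i - 1) * (n - 1 - (i - 1)).choose (2 * i - 2 - (i - 1)) :=
      Nat.choose_mul (by omega)
    have h3 : n - 1 - (i - 1) = m := by omega
    have h4 : 2 * i - 2 - (i - 1) = r := by omega
    have h1z : (n : ℤ) * (n - 1).choose (i - 1) = n.choose i * i := by exact_mod_cast h1
    rw [h2, h3, h4]
    zify
    linear_combination -(m.choose r : ℤ) * h1z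
  have hn0 : (n : ℚ) ≠ 0 := by positivity
  have hi0 : (i : ℚ) ≠ 0 := by positivity
  have hq : (i : ℚ) * (n.choose i * m.choose r) =
      n * ((n - 1).choose (2 * i - 2) * (2 * i - 2).choose (i - 1)) := by
    exact_mod_cast congrArg (Nat.cast : ℕ → ℚ) hnat
  field_simp
  linear_combination hq
end

section
/- For n ≥ 1 and 0 ≤ j ≤ n-1: Σ_{i=1}^{⌊(n-j+1)/2⌋} (1/n)·C(n,i)·C(n-i,j)·C(n-i-j,i-1) = C(n-1,j)·M_{n-j-1}, where M_m is the m-th Motzkin number. -/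
/-- The `m`-th Motzkin number, `M_m = Σ_k C(m,2k)·Catalan(k)`. -/
def motzkin (m : ℕ) : ℕ := ∑ k ∈ Finset.range (m + 1), m.choose (2 * k) * catalan k

open Finset Nat

lemma cast_add_choose' (x y : ℕ) :
    (((x + y).choose y : ℕ) : ℚ) = (x + y)! / ((x)! * (y)!) := by
  rw [eq_div_iff (by
    exact mul_ne_zero (by exact_mod_cast (Nat.factorial_pos x).ne')
      (by exact_mod_cast (Nat.factorial_pos y).ne'))]
  have := congrArg (Nat.cast (R := ℚ)) (Nat.add_choose_mul_factorial_mul_factorial x y)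
  push_cast at this
  linarith [this]

lemma cast_catalan' (k : ℕ) :
    ((catalan k : ℕ) : ℚ) = (k + k)! / ((k)! * (k)! * (k + 1)) := by
  have h := succ_mul_catalan_eq_centralBinom k
  have h2 : ((k + k).choose k : ℚ) = (k + k)! / ((k)! * (k)!) := cast_add_choose' k k
  have h3 : ((k : ℚ) + 1) * catalan k = (k + k).choose k := by
    rw [Nat.centralBinom] at h
    have e : 2 * k = k + k := by ring
    rw [e] at h
    exact_mod_cast h
  have hk : ((k : ℚ) + 1) ≠ 0 := by positivity
  field_simp at h2 h3 ⊢
  nlinarith [h2, h3]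

lemma key' (k a j : ℕ) :
    (1 / ((k + a + j + k + 1 : ℕ) : ℚ)) * ((k + a + j + k + 1).choose (k + 1))
      * ((k + a + j).choose j) * ((k + a).choose k)
    = ((k + a + j + k).choose j) * ((k + a + k).choose (k + k)) * catalan k := by
  have c0 : ((k + a + j + k + 1 : ℕ) : ℚ) = (((k + a + j) + (k + 1) : ℕ) : ℚ) := by
    norm_cast
  have c1 : (((k + a + j + k + 1).choose (k + 1) : ℕ) : ℚ)
      = (((k + a + j) + (k + 1)).choose (k + 1) : ℕ) := by
    rw [show k + a + j + k + 1 = (k + a + j) + (k + 1) from by omega]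
  have c3 : (((k + a).choose k : ℕ) : ℚ) = ((a + k).choose k : ℕ) := by
    rw [show k + a = a + k from by omega]
  have c4 : (((k + a + j + k).choose j : ℕ) : ℚ) = (((k + a + k) + j).choose j : ℕ) := by
    rw [show k + a + j + k = (k + a + k) + j from by omega]
  have c5 : (((k + a + k).choose (k + k) : ℕ) : ℚ) = ((a + (k + k)).choose (k + k) : ℕ) := by
    rw [show k + a + k = a + (k + k) from by omega]
  rw [c0, c1, c3, c4, c5,
    cast_add_choose' (k + a + j) (k + 1), cast_add_choose' (k + a) j,
    cast_add_choose' a k, cast_add_choose' (k + a + k) j, cast_add_choose' a (k + k),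
    cast_catalan']
  have e5 : (k + a + j) + (k + 1) = ((k + a + k) + j) + 1 := by omega
  have e7 : a + (k + k) = k + a + k := by omega
  rw [e5, e7, Nat.factorial_succ, Nat.factorial_succ k]
  have f1 : (((k + a + k + j)! : ℕ) : ℚ) ≠ 0 := by exact_mod_cast (Nat.factorial_pos _).ne'
  have f2 : (((k + a)! : ℕ) : ℚ) ≠ 0 := by exact_mod_cast (Nat.factorial_pos _).ne'
  have f3 : (((k + a + k)! : ℕ) : ℚ) ≠ 0 := by exact_mod_cast (Nat.factorial_pos _).ne'
  have f4 : (((k + k)! : ℕ) : ℚ) ≠ 0 := by exact_mod_cast (Nat.factorial_pos _).ne'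
  have f5 : ((k ! : ℕ) : ℚ) ≠ 0 := by exact_mod_cast (Nat.factorial_pos _).ne'
  have f6 : ((a ! : ℕ) : ℚ) ≠ 0 := by exact_mod_cast (Nat.factorial_pos _).ne'
  have f7 : ((j ! : ℕ) : ℚ) ≠ 0 := by exact_mod_cast (Nat.factorial_pos _).ne'
  have f8 : ((k : ℚ) + 1) ≠ 0 := by positivity
  have f9 : (((k + a + k + j : ℕ) : ℚ) + 1) ≠ 0 := by positivity
  push_cast
  field_simp
  ring_nf

/-- Summing the refined count of plane trees over the number of old leaves `i`
recovers the count by young leaves: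
`Σ_{i=1}^{⌊(n-j+1)/2⌋} (1/n)·C(n,i)·C(n-i,j)·C(n-i-j,i-1) = C(n-1,j)·M_{n-j-1}`. -/
theorem sum_refined_eq_young_count (n j : ℕ) (hn : 1 ≤ n) (hj : j ≤ n - 1) :
    ∑ i ∈ Finset.Icc 1 ((n - j + 1) / 2),
        (1 / n : ℚ) * n.choose i * (n - i).choose j * (n - i - j).choose (i - 1) =
      ((n - 1).choose j : ℚ) * motzkin (n - j - 1) := by
  set m := n - j - 1 with hm
  have hnm : n = m + j + 1 := by omega
  have hM : (n - j + 1) / 2 = m / 2 + 1 := by omega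
  rw [hM]
  rw [show Finset.Icc 1 (m / 2 + 1) = Finset.Ico 1 (m / 2 + 1 + 1) from by
    rw [Finset.Ico_add_one_right_eq_Icc]]
  rw [Finset.sum_Ico_eq_sum_range]
  simp only [Nat.add_sub_cancel]
  have step : ∀ k ∈ Finset.range (m / 2 + 1),
      (1 / n : ℚ) * n.choose (1 + k) * (n - (1 + k)).choose j * (n - (1 + k) - j).choose (1 + k - 1)
        = ((n - 1).choose j : ℚ) * (m.choose (2 * k) * catalan k) := by
    intro k hk
    rw [Finset.mem_range] at hk
    have h2k : 2 * k ≤ m := by omega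
    set a := m - 2 * k with ha
    have e1 : n = k + a + j + k + 1 := by omega
    have e2 : 1 + k = k + 1 := by omega
    have e3 : n - (k + 1) = k + a + j := by omega
    have e4 : n - (k + 1) - j = k + a := by omega
    have e5 : k + 1 - 1 = k := by omega
    have e6 : n - 1 = k + a + j + k := by omega
    have e7 : m = k + a + k := by omega
    have e8 : 2 * k = k + k := by omega
    rw [e2, e4, e3, e5, e6]
    rw [show (m.choose (2 * k) : ℚ) = ((k + a + k).choose (k + k) : ℕ) from by rw [← e7, ← e8]]
    rw [show ((n : ℚ)) = ((k + a + j + k + 1 : ℕ) : ℚ) from by rw [← e1]]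
    rw [show ((n.choose (k + 1) : ℕ) : ℚ) = ((k + a + j + k + 1).choose (k + 1) : ℕ) from by
      rw [← e1]]
    push_cast
    have := key' k a j
    push_cast at this
    linarith [this]
  rw [Finset.sum_congr rfl step]
  rw [motzkin]
  push_cast [Nat.cast_sum]
  rw [Finset.mul_sum]
  apply Finset.sum_subset
  · intro x hx
    rw [Finset.mem_range] at *
    omega
  · intro x hx hnx
    rw [Finset.mem_range] at *
    have : m < 2 * x := by omega
    rw [Nat.choose_eq_zero_of_lt this]
    push_cast
    ring
end
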